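/- Let t_0,...,t_N be positive reals such that for every i ∈ {-1,0,...,N-2} the quantity μ_{0,i} (defined by μ_{0,-1}=1, μ_{0,0}=1-t_0, μ_{0,i+1}=μ_{0,i}-t_{i+1}μ_{0,i-1}) is positive, and such that μ_{0,N} = 0. Define p_1(a_0)=t_0, p_1(a_1)=1-t_0, p_i(a_{i-1}) = t_{i-1}·μ_{0,i-3}/μ_{0,i-2} and p_i(a_i) = μ_{0,i-1}/μ_{0,i-2} for 1 < i < N, and p_N(a_{N-1}) = 1-t_N, p_N(a_N) = t_N. Then for every i with 1 ≤ i ≤ N-1, p_i(a_{i-1}) + p_i(a_i) = 1, and p_i(a_i)·p_{i+1}(a_i) = t_i for all 0 < i < N. -/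

import Mathlib

/-- `pathMu t (i+1)` is the quantity `μ_{0,i}` of the paper (index shifted by
one so that `pathMu t 0 = μ_{0,-1} = 1`). -/
def pathMu (t : ℕ → ℝ) : ℕ → ℝ
  | 0 => 1
  | 1 => 1 - t 0
  | (n + 2) => pathMu t (n + 1) - t (n + 1) * pathMu t n

/-- `p_i(a_{i-1})` for `1 ≤ i ≤ N`:  `p_1(a_0) = t_0`,
`p_i(a_{i-1}) = t_{i-1} μ_{0,i-3}/μ_{0,i-2}` for `1 < i < N`, and
`p_N(a_{N-1}) = 1 - t_N`.  (Recall `μ_{0,k} = pathMu t (k+1)`.) -/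
noncomputable def pLeft (t : ℕ → ℝ) (N i : ℕ) : ℝ :=
  if i = 1 then t 0
  else if i = N then 1 - t N
  else t (i - 1) * pathMu t (i - 2) / pathMu t (i - 1)

/-- `p_i(a_i)` for `1 ≤ i ≤ N`:  `p_1(a_1) = 1 - t_0`,
`p_i(a_i) = μ_{0,i-1}/μ_{0,i-2}` for `1 < i < N`, and `p_N(a_N) = t_N`. -/
noncomputable def pRight (t : ℕ → ℝ) (N i : ℕ) : ℝ :=
  if i = 1 then 1 - t 0
  else if i = N then t N
  else pathMu t i / pathMu t (i - 1)

/-- with `t_0,...,t_N` positive, `μ_{0,i} > 0` for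
`-1 ≤ i ≤ N-2`, and `μ_{0,N} = 0`, the local distributions of the path model
satisfy `p_i(a_{i-1}) + p_i(a_i) = 1` for `1 ≤ i ≤ N-1` and
`p_i(a_i)·p_{i+1}(a_i) = t_i` for `0 < i < N`. -/
theorem path_model_local_distributions (N : ℕ) (hN : 2 ≤ N) (t : ℕ → ℝ)
    (hpos : ∀ i ≤ N, 0 < t i)
    (hmu_pos : ∀ i ≤ N - 1, 0 < pathMu t i)
    (hmu_zero : pathMu t (N + 1) = 0) :
    (∀ i, 1 ≤ i → i ≤ N - 1 → pLeft t N i + pRight t N i = 1) ∧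
    (∀ i, 0 < i → i < N → pRight t N i * pLeft t N (i + 1) = t i) := by
  constructor
  · intro i hi1 hiN
    rcases eq_or_lt_of_le hi1 with h1 | h1
    · simp [pLeft, pRight, ← h1]
    · obtain ⟨j, rfl⟩ : ∃ j, i = j + 2 := ⟨i - 2, by omega⟩
      have hne1 : j + 2 ≠ 1 := by omega
      have hneN : j + 2 ≠ N := by omega
      have hmu : 0 < pathMu t (j + 1) := hmu_pos _ (by omega)
      simp only [pLeft, pRight, if_neg hne1, if_neg hneN]
      rw [show j + 2 - 1 = j + 1 from rfl, show j + 2 - 2 = j from rfl,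
        show pathMu t (j + 2) = pathMu t (j + 1) - t (j + 1) * pathMu t j from rfl]
      field_simp
      ring
  · intro i hi0 hiN
    have hne1' : i + 1 ≠ 1 := by omega
    by_cases hNi : i + 1 = N
    · rcases eq_or_lt_of_le (show 1 ≤ i from hi0) with h1 | h1
      · -- i = 1, N = 2
        have hN2 : N = 2 := by omega
        subst hN2
        obtain rfl : i = 1 := by omega
        simp only [pLeft, pRight]
        norm_num
        have h3 : pathMu t 3 = (1 - t 0) - t 1 - t 2 * (1 - t 0) := by
          show pathMu t 2 - t 2 * pathMu t 1 = _
          show pathMu t 1 - t 1 * pathMu t 0 - t 2 * pathMu t 1 = _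
          show (1 - t 0) - t 1 * 1 - t 2 * (1 - t 0) = _
          ring
        have := hmu_zero
        rw [show (2:ℕ) + 1 = 3 from rfl, h3] at this
        nlinarith [this]
      · obtain ⟨j, rfl⟩ : ∃ j, i = j + 2 := ⟨i - 2, by omega⟩
        have hne1 : j + 2 ≠ 1 := by omega
        have hneN : j + 2 ≠ N := by omega
        have hmu : 0 < pathMu t (j + 1) := hmu_pos _ (by omega)
        simp only [pLeft, pRight, if_neg hne1, if_neg hneN, if_neg hne1', if_pos hNi]
        rw [show j + 2 - 1 = j + 1 from rfl]
        have hzero := hmu_zero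
        rw [← hNi] at hzero
        rw [show j + 2 + 1 + 1 = j + 4 from rfl,
          show pathMu t (j + 4) = pathMu t (j + 3) - t (j + 3) * pathMu t (j + 2) from rfl,
          show pathMu t (j + 3) = pathMu t (j + 2) - t (j + 2) * pathMu t (j + 1) from rfl] at hzero
        rw [← hNi]
        field_simp
        nlinarith [hzero]
    · rcases eq_or_lt_of_le (show 1 ≤ i from hi0) with h1 | h1
      · -- i = 1, N > 2
        have hneN2 : (2:ℕ) ≠ N := by omega
        have hmu1 : 0 < pathMu t 1 := hmu_pos _ (by omega)
        simp only [← h1, pRight, pLeft, if_pos rfl, if_neg (by norm_num : (2:ℕ) ≠ 1),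
          if_neg hneN2]
        rw [show (2:ℕ) - 1 = 1 from rfl, show (2:ℕ) - 2 = 0 from rfl,
          show pathMu t 0 = 1 from rfl, show pathMu t 1 = 1 - t 0 from rfl]
        have : (1 : ℝ) - t 0 ≠ 0 := by
          rw [show pathMu t 1 = 1 - t 0 from rfl] at hmu1; linarith
        field_simp
        simp
      · obtain ⟨j, rfl⟩ : ∃ j, i = j + 2 := ⟨i - 2, by omega⟩
        have hne1 : j + 2 ≠ 1 := by omega
        have hneN : j + 2 ≠ N := by omega
        have hneN3 : j + 3 ≠ N := by omega
        have hmu1 : 0 < pathMu t (j + 1) := hmu_pos _ (by omega)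
        have hmu2 : 0 < pathMu t (j + 2) := hmu_pos _ (by omega)
        simp only [pRight, pLeft, if_neg hne1, if_neg hneN, if_neg hne1',
          if_neg hneN3]
        field_simp
        rw [show j + 2 + 1 - 1 = j + 2 from by omega, show j + 2 + 1 - 2 = j + 1 from by omega,
          show j + 2 - 1 = j + 1 from by omega]
        field_simp
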